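/- Every unital surjective numerical-radius-preserving linear operator T between two unital C*-algebras A and B maps self-adjoint elements to self-adjoint elements. Concretely: if ν(Tx) = ν(x) for all x ∈ A, T1 = 1, and T is surjective, then T(A_sa) ⊆ B_sa. -/

import Mathlib

open ComplexOrder

/-- A state on a unital C*-algebra: a positive linear functional of norm one. -/
def IsState {A : Type*} [NormedRing A] [StarRing A] [NormedAlgebra ℂ A]
    (φ : A →L[ℂ] ℂ) : Prop :=
  ‖φ‖ = 1 ∧ ∀ a : A, 0 ≤ φ (star a * a)

/-- The numerical radius `ν(x) = sup {|φ(x)| : φ a state}`. -/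
noncomputable def numRadius {A : Type*} [NormedRing A] [StarRing A] [NormedAlgebra ℂ A]
    (x : A) : ℝ :=
  ⨆ φ : {φ : A →L[ℂ] ℂ // IsState φ}, ‖(φ : A →L[ℂ] ℂ) x‖

lemma two_mul_le_imp_zero {y C : ℝ} (h : ∀ t : ℝ, 2*y*t ≤ C) : y = 0 := by
  by_contra hy
  have h0 := h 0
  have := h ((C+1)/(2*y))
  rw [mul_div_cancel₀] at this
  · linarith
  · simpa using hy

lemma complex_norm_sq (w : ℂ) : ‖w‖^2 = w.re^2 + w.im^2 := by
  rw [Complex.sq_norm, Complex.normSq_apply]; ring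

section Aux
variable {A : Type*} [NormedRing A] [StarRing A] [NormedAlgebra ℂ A]

lemma IsState.pos_im_eq_zero {φ : A →L[ℂ] ℂ} (hφ : IsState φ) (a : A) :
    (φ (star a * a)).im = 0 := by
  have := hφ.2 a
  rw [Complex.le_def] at this
  simpa using this.2.symm

lemma IsState.im_eq_zero {φ : A →L[ℂ] ℂ} (hφ : IsState φ) {a : A} (ha : IsSelfAdjoint a) :
    (φ a).im = 0 := by
  have key : star (1 + a) * (1 + a) = star (1:A) * 1 + (a + a) + star a * a := by
    rw [star_add, star_one, ha.star_eq]
    noncomm_ring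
  have h1 := hφ.pos_im_eq_zero (1 + a)
  have h2 := hφ.pos_im_eq_zero (1 : A)
  have h3 := hφ.pos_im_eq_zero a
  rw [key] at h1
  simp only [map_add, Complex.add_im] at h1
  linarith

lemma IsState.norm_apply_le {φ : A →L[ℂ] ℂ} (hφ : IsState φ) (x : A) : ‖φ x‖ ≤ ‖x‖ := by
  simpa [hφ.1] using φ.le_opNorm x

lemma IsState.norm_apply_le_numRadius {φ : A →L[ℂ] ℂ} (hφ : IsState φ) (x : A) :
    ‖φ x‖ ≤ numRadius x := by
  have hbdd : BddAbove (Set.range fun ψ : {ψ : A →L[ℂ] ℂ // IsState ψ} => ‖(ψ : A →L[ℂ] ℂ) x‖) := by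
    refine ⟨‖x‖, ?_⟩
    rintro r ⟨ψ, rfl⟩
    exact ψ.2.norm_apply_le x
  exact le_ciSup hbdd (⟨φ, hφ⟩ : {ψ : A →L[ℂ] ℂ // IsState ψ})

lemma numRadius_nonneg (x : A) : 0 ≤ numRadius x :=
  Real.iSup_nonneg fun _ => norm_nonneg _

lemma numRadius_le {x : A} {r : ℝ} (hr : 0 ≤ r)
    (h : ∀ φ : A →L[ℂ] ℂ, IsState φ → ‖φ x‖ ≤ r) : numRadius x ≤ r :=
  Real.iSup_le (fun φ => h φ φ.2) hr

end Aux

section L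
variable {A : Type*} [NormedRing A] [StarRing A] [CStarRing A] [NormedAlgebra ℂ A]
    [CompleteSpace A] [StarModule ℂ A] [NormOneClass A]

omit [CompleteSpace A] in
lemma norm_add_smul_I_sq {a : A} (ha : IsSelfAdjoint a) (t : ℝ) :
    ‖a + ((t:ℂ) * Complex.I) • (1:A)‖ ^ 2 ≤ ‖a‖ ^ 2 + t ^ 2 := by
  set z : ℂ := (t:ℂ) * Complex.I with hz
  set x := a + z • (1:A) with hx
  have hstar : star x = a - z • (1:A) := by
    rw [hx, star_add, ha.star_eq, star_smul, star_one]
    have : star z = -z := by simp [hz, Complex.ext_iff]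
    rw [this, neg_smul, sub_eq_add_neg]
  have hmul : star x * x = a * a + (t^2 : ℂ) • (1:A) := by
    have hzz : -(z * z) = ((t^2 : ℝ) : ℂ) := by
      rw [hz]; ring_nf; simp [Complex.I_sq]
    have e1 : x = a + algebraMap ℂ A z := by rw [hx, Algebra.algebraMap_eq_smul_one]
    have e2 : star x = a - algebraMap ℂ A z := by rw [hstar, Algebra.algebraMap_eq_smul_one]
    rw [e2, e1, sub_mul, mul_add, mul_add, ← Algebra.commutes z a, ← map_mul]
    rw [Algebra.algebraMap_eq_smul_one (z * z)]
    have : (t^2 : ℂ) • (1:A) = (-(z*z)) • (1:A) := by rw [hzz]; push_cast; ring_nf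
    rw [this, neg_smul]
    abel
  have h1 : ‖x‖ ^ 2 = ‖star x * x‖ := by
    rw [CStarRing.norm_star_mul_self, sq]
  rw [h1, hmul]
  calc ‖a * a + (t^2 : ℂ) • (1:A)‖ ≤ ‖a * a‖ + ‖(t^2 : ℂ) • (1:A)‖ := norm_add_le _ _
    _ = ‖a‖^2 + t^2 := by
        rw [norm_smul, norm_one, mul_one]
        nth_rewrite 1 [← ha.star_eq]
        rw [CStarRing.norm_star_mul_self, ← sq]
        norm_num

omit [CompleteSpace A] in
lemma im_eq_zero_of_unital_contraction {f : A →L[ℂ] ℂ} (h1 : ‖f‖ ≤ 1) (h2 : f 1 = 1)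
    {a : A} (ha : IsSelfAdjoint a) : (f a).im = 0 := by
  refine two_mul_le_imp_zero (C := ‖a‖^2) fun t => ?_
  have hb : ‖f (a + ((t:ℂ) * Complex.I) • (1:A))‖ ≤ ‖a + ((t:ℂ) * Complex.I) • (1:A)‖ := by
    calc ‖f _‖ ≤ ‖f‖ * ‖_‖ := f.le_opNorm _
      _ ≤ 1 * _ := by gcongr
      _ = _ := one_mul _
  have hval : f (a + ((t:ℂ) * Complex.I) • (1:A)) = f a + (t:ℂ) * Complex.I := by
    rw [map_add, map_smul, h2, smul_eq_mul, mul_one]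
  rw [hval] at hb
  have hb2 := pow_le_pow_left₀ (norm_nonneg _) hb 2
  have hsq : ‖f a + (t:ℂ) * Complex.I‖^2 = (f a).re^2 + ((f a).im + t)^2 := by
    rw [complex_norm_sq]; simp
  have := norm_add_smul_I_sq ha t
  nlinarith

lemma isState_of_norm_le_one {f : A →L[ℂ] ℂ} (h1 : ‖f‖ ≤ 1) (h2 : f 1 = 1) : IsState f := by
  have hnorm : ‖f‖ = 1 := by
    refine le_antisymm h1 ?_
    calc (1:ℝ) = ‖f 1‖ := by simp [h2]
      _ ≤ ‖f‖ * ‖(1:A)‖ := f.le_opNorm 1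
      _ = ‖f‖ := by simp
  refine ⟨hnorm, fun b => ?_⟩
  letI : CStarAlgebra A :=
    { ‹NormedRing A›, ‹StarRing A›, ‹CStarRing A›, ‹NormedAlgebra ℂ A›, ‹StarModule ℂ A›,
      ‹CompleteSpace A› with }
  letI := CStarAlgebra.spectralOrder A
  haveI := CStarAlgebra.spectralOrderedRing A
  set a := star b * b with ha_def
  have hsa : IsSelfAdjoint a := IsSelfAdjoint.star_mul_self b
  have him := im_eq_zero_of_unital_contraction h1 h2 hsa
  have hpos : (0:A) ≤ a := star_mul_self_nonneg b
  have hle : a ≤ algebraMap ℝ A ‖a‖ := IsSelfAdjoint.le_algebraMap_norm_self hsa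
  set d := algebraMap ℝ A ‖a‖ - a with hd_def
  have hd0 : (0:A) ≤ d := sub_nonneg.2 hle
  have hdle : d ≤ algebraMap ℝ A ‖a‖ := sub_le_self _ hpos
  have hdn : ‖d‖ ≤ ‖a‖ := by
    calc ‖d‖ ≤ ‖algebraMap ℝ A ‖a‖‖ := CStarAlgebra.norm_le_norm_of_nonneg_of_le hd0 hdle
      _ = ‖a‖ := by
        rw [Algebra.algebraMap_eq_smul_one, norm_smul, norm_one, mul_one, Real.norm_eq_abs,
          abs_of_nonneg (norm_nonneg a)]
  have halg : algebraMap ℝ A ‖a‖ = ((‖a‖ : ℂ)) • (1:A) := by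
    rw [IsScalarTower.algebraMap_apply ℝ ℂ A, Algebra.algebraMap_eq_smul_one]
    norm_num
  have hfd : f d = (‖a‖ : ℂ) - f a := by
    rw [hd_def, map_sub, halg, map_smul, h2, smul_eq_mul, mul_one]
  have hreal : (‖a‖ : ℂ) - f a = ((‖a‖ - (f a).re : ℝ) : ℂ) := by
    apply Complex.ext <;> simp [him]
  have hfdn : ‖f d‖ ≤ ‖a‖ := by
    calc ‖f d‖ ≤ ‖f‖ * ‖d‖ := f.le_opNorm d
      _ = ‖d‖ := by rw [hnorm, one_mul]
      _ ≤ ‖a‖ := hdn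
  rw [hfd, hreal, Complex.norm_real, Real.norm_eq_abs, abs_le] at hfdn
  rw [Complex.le_def]
  refine ⟨by simpa using by linarith [hfdn.1], by simp [him]⟩

lemma exists_state_norm_eq {c : A} (hc : IsSelfAdjoint c) :
    ∃ φ : A →L[ℂ] ℂ, IsState φ ∧ φ 1 = 1 ∧ ‖φ c‖ = ‖c‖ := by
  letI : CStarAlgebra A :=
    { ‹NormedRing A›, ‹StarRing A›, ‹CStarRing A›, ‹NormedAlgebra ℂ A›, ‹StarModule ℂ A›,
      ‹CompleteSpace A› with }
  haveI : IsStarNormal c := hc.isStarNormal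
  have h10 : (1:A) ≠ 0 := by
    intro h
    simpa [h] using (norm_one : ‖(1:A)‖ = 1)
  haveI : Nontrivial A := ⟨1, 0, h10⟩
  obtain ⟨lam, hmem, hlam⟩ := spectrum.exists_nnnorm_eq_spectralRadius (a := c)
  have hlam_norm : ‖lam‖ = ‖c‖ := by
    have := hc.spectralRadius_eq_nnnorm
    rw [this] at hlam
    exact_mod_cast congrArg ENNReal.toReal hlam
  set S := StarAlgebra.elemental ℂ c with hS
  set p : Submodule ℂ A := Subalgebra.toSubmodule S.toSubalgebra with hp
  obtain ⟨χ, hχ⟩ := (StarAlgebra.elemental.bijective_characterSpaceToSpectrum c).2 ⟨lam, hmem⟩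
  have hχc : χ ⟨c, StarAlgebra.elemental.self_mem ℂ c⟩ = lam := congrArg Subtype.val hχ
  have hmemp : ∀ x : p, (x : A) ∈ S := fun x => x.2
  have hbound : ∀ x : p, ‖χ ⟨(x:A), hmemp x⟩‖ ≤ ‖(x:A)‖ := by
    intro x
    have h1 : χ ⟨(x:A), hmemp x⟩ ∈ spectrum ℂ (⟨(x:A), hmemp x⟩ : S) :=
      AlgHom.apply_mem_spectrum χ _
    exact spectrum.norm_le_norm_of_mem (𝕜 := ℂ) (A := S) h1
  let f₀ : p →L[ℂ] ℂ := LinearMap.mkContinuous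
    { toFun := fun x => χ ⟨(x:A), hmemp x⟩
      map_add' := by intro x y; rw [← map_add]; rfl
      map_smul' := by intro m x; rw [← map_smul]; rfl } 1
    (by intro x; rw [one_mul]; exact hbound x)
  obtain ⟨g, hg, hgnorm⟩ := exists_extension_norm_eq p f₀
  have hf₀ : ‖f₀‖ ≤ 1 := LinearMap.mkContinuous_norm_le _ zero_le_one _
  have hone_mem : (1 : A) ∈ p := S.toSubalgebra.one_mem
  have hg1 : g 1 = 1 := by
    have h := hg ⟨1, hone_mem⟩
    have e : f₀ ⟨1, hone_mem⟩ = 1 := map_one χ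
    rw [e] at h
    exact h
  have hc_mem : c ∈ p := StarAlgebra.elemental.self_mem ℂ c
  have hgc : g c = lam := by
    have h := hg ⟨c, hc_mem⟩
    have e : f₀ ⟨c, hc_mem⟩ = lam := hχc
    rw [e] at h
    exact h
  have hstate := isState_of_norm_le_one (hgnorm ▸ hf₀) hg1
  exact ⟨g, hstate, hg1, by rw [hgc, hlam_norm]⟩

end L

/-- A unital surjective numerical-radius-preserving operator between unital C*-algebras
maps self-adjoint elements to self-adjoint elements. -/
theorem selfAdjoint_image_of_numRadius_preserving
    {A B : Type*}
    [NormedRing A] [StarRing A] [CStarRing A] [NormedAlgebra ℂ A] [CompleteSpace A]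
    [StarModule ℂ A] [NormOneClass A]
    [NormedRing B] [StarRing B] [CStarRing B] [NormedAlgebra ℂ B] [CompleteSpace B]
    [StarModule ℂ B] [NormOneClass B]
    (T : A →ₗ[ℂ] B) (hone : T 1 = 1) (hsurj : Function.Surjective T)
    (hnu : ∀ x : A, numRadius (T x) = numRadius x) :
    ∀ a : A, IsSelfAdjoint a → IsSelfAdjoint (T a) := by
  intro a ha
  set u := T a with hu_def
  set c : B := (Complex.I / 2) • (star u - u) with hc_def
  set b : B := ((1:ℂ)/2) • (u + star u) with hb_def
  have hcsa : IsSelfAdjoint c := by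
    rw [hc_def, IsSelfAdjoint, star_smul, star_sub, star_star]
    have hs : star (Complex.I / 2) = -(Complex.I / 2) := by simp [Complex.ext_iff]; norm_num
    rw [hs, neg_smul, ← smul_neg, neg_sub]
  have hbsa : IsSelfAdjoint b := by
    rw [hb_def, IsSelfAdjoint, star_smul, star_add, star_star]
    have hs : star ((1:ℂ) / 2) = (1:ℂ)/2 := by simp [Complex.ext_iff]
    rw [hs, add_comm]
  have hdecomp : u = b + Complex.I • c := by
    rw [hb_def, hc_def, smul_smul]
    have hI : Complex.I * (Complex.I / 2) = -((1:ℂ)/2) := by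
      rw [mul_div_assoc', Complex.I_mul_I]
      ring
    rw [hI]
    match_scalars <;> ring
  obtain ⟨ψ, hψ, hψ1, hψc⟩ := exists_state_norm_eq hcsa
  set y := (ψ c).re with hy_def
  have hyim : (ψ c).im = 0 := hψ.im_eq_zero hcsa
  have hbim : (ψ b).im = 0 := hψ.im_eq_zero hbsa
  have key : ∀ t : ℝ, 2 * y * t ≤ (numRadius a)^2 := by
    intro t
    set z : A := a + ((t:ℂ) * Complex.I) • 1 with hz_def
    have hup : numRadius z ≤ Real.sqrt ((numRadius a)^2 + t^2) := by
      refine numRadius_le (Real.sqrt_nonneg _) fun φ hφ => ?_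
      have h1 : φ z = φ a + (t:ℂ) * Complex.I * φ 1 := by
        rw [hz_def, map_add, map_smul, smul_eq_mul]
      have haim : (φ a).im = 0 := hφ.im_eq_zero ha
      have h1im : (φ 1).im = 0 := hφ.im_eq_zero (IsSelfAdjoint.one (R := A))
      have h1re0 : 0 ≤ (φ 1).re := by
        have := hφ.2 1
        rw [Complex.le_def] at this
        simpa using this.1
      have h1re1 : (φ 1).re ≤ 1 := by
        have h := hφ.norm_apply_le 1
        rw [norm_one] at h
        calc (φ 1).re ≤ |(φ 1).re| := le_abs_self _
          _ ≤ ‖φ 1‖ := Complex.abs_re_le_norm _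
          _ ≤ 1 := by exact h
      have hre : |(φ a).re| ≤ numRadius a := by
        calc |(φ a).re| ≤ ‖φ a‖ := Complex.abs_re_le_norm _
          _ ≤ numRadius a := by exact hφ.norm_apply_le_numRadius a
      have hsq : ‖φ z‖^2 = (φ a).re^2 + (t * (φ 1).re)^2 := by
        rw [h1, complex_norm_sq]
        simp [haim, h1im, Complex.mul_re, Complex.mul_im]
      rw [← Real.sqrt_sq (norm_nonneg (φ z))]
      apply Real.sqrt_le_sqrt
      rw [hsq]
      have habs := abs_le.mp hre
      have e1 : (φ a).re^2 ≤ (numRadius a)^2 := sq_le_sq' habs.1 habs.2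
      have e2 : (t * (φ 1).re)^2 ≤ t^2 := by
        have e3 : (t * (φ 1).re)^2 = t^2 * ((φ 1).re)^2 := by ring
        rw [e3]
        have hs1 : ((φ 1).re)^2 ≤ 1 := by nlinarith
        calc t^2 * ((φ 1).re)^2 ≤ t^2 * 1 := mul_le_mul_of_nonneg_left hs1 (sq_nonneg t)
          _ = t^2 := mul_one _
      linarith
    have hTz : T z = u + ((t:ℂ) * Complex.I) • 1 := by
      rw [hz_def, map_add, map_smul, hone, hu_def]
    have hval : ψ (T z) = ψ u + (t:ℂ) * Complex.I := by
      rw [hTz, map_add, map_smul, hψ1, smul_eq_mul, mul_one]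
    have hψu : ψ u = ψ b + Complex.I * ψ c := by
      nth_rewrite 1 [hdecomp]
      rw [map_add]
      congr 1
      rw [map_smul, smul_eq_mul]
    have hle : ‖ψ (T z)‖ ≤ Real.sqrt ((numRadius a)^2 + t^2) := by
      calc ‖ψ (T z)‖ ≤ numRadius (T z) := hψ.norm_apply_le_numRadius (T z)
        _ = numRadius z := hnu z
        _ ≤ _ := hup
    have hsq2 : ‖ψ (T z)‖^2 = (ψ b).re^2 + (y + t)^2 := by
      rw [hval, hψu, complex_norm_sq]
      simp [hbim, hyim, hy_def, Complex.mul_re, Complex.mul_im, Complex.add_re, Complex.add_im]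
    have hs := Real.sq_sqrt (by positivity : (0:ℝ) ≤ (numRadius a)^2 + t^2)
    have hp2 := pow_le_pow_left₀ (norm_nonneg (ψ (T z))) hle 2
    nlinarith [sq_nonneg ((ψ b).re)]
  have hy0 : y = 0 := two_mul_le_imp_zero key
  have hψc0 : ψ c = 0 := Complex.ext (by simpa [hy_def] using hy0) (by simpa using hyim)
  have hc0 : c = 0 := by
    have : ‖c‖ = 0 := by rw [← hψc, hψc0, norm_zero]
    exact norm_eq_zero.mp this
  have hub : u = b := by rw [hdecomp, hc0, smul_zero, add_zero]
  rw [hub]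
  exact hbsa
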